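/- Every involution in S̃_n is of the form π^{-1} ∘ π for some π ∈ S̃_n, where ∘ is the Demazure product; consequently, for each z ∈ Ĩ_n the set A_Hecke(z) = {π ∈ S̃_n : π^{-1} ∘ π = z} is nonempty and finite. -/

import Mathlib

open scoped TensorProduct

/-- Membership in the affine symmetric group `S̃_n`, viewed inside `Equiv.Perm ℤ`. -/
def IsAffine (n : ℕ) (π : Equiv.Perm ℤ) : Prop :=
  (∀ i : ℤ, π (i + n) = π i + n) ∧
  (∑ i ∈ Finset.Icc (1 : ℤ) (n : ℤ), π i) = ∑ i ∈ Finset.Icc (1 : ℤ) (n : ℤ), i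

/-- The underlying function of the affine reflection `t_{ij}`. -/
def affTFun (n : ℕ) (i j k : ℤ) : ℤ :=
  if (k - i) % (n : ℤ) = 0 then k - i + j
  else if (k - j) % (n : ℤ) = 0 then k - j + i
  else k

theorem affTFun_involutive {n : ℕ} {i j : ℤ} (h : ¬ (j - i) % (n : ℤ) = 0) :
    Function.Involutive (affTFun n i j) := by
  have key : ∀ a : ℤ, a % (n : ℤ) = 0 ↔ (n : ℤ) ∣ a :=
    fun a => (@Int.dvd_iff_emod_eq_zero (n : ℤ) a).symm
  rw [key] at h
  intro k
  by_cases h1 : (n : ℤ) ∣ (k - i)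
  · have h2 : ¬ (n : ℤ) ∣ (k - i + j - i) := by
      intro hd
      apply h
      have h5 : j - i = (k - i + j - i) - (k - i) := by ring
      rw [h5]
      exact dvd_sub hd h1
    have h3 : (n : ℤ) ∣ (k - i + j - j) := by
      have h5 : k - i + j - j = k - i := by ring
      rw [h5]; exact h1
    have e1 : affTFun n i j k = k - i + j := by simp [affTFun, key, h1]
    have e2 : affTFun n i j (k - i + j) = k := by
      simp only [affTFun, key]
      rw [if_neg h2, if_pos h3]
      ring
    rw [e1, e2]
  · by_cases h2 : (n : ℤ) ∣ (k - j)
    · have h3 : (n : ℤ) ∣ (k - j + i - i) := by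
        have h5 : k - j + i - i = k - j := by ring
        rw [h5]; exact h2
      have e1 : affTFun n i j k = k - j + i := by simp [affTFun, key, h1, h2]
      have e2 : affTFun n i j (k - j + i) = k := by
        simp only [affTFun, key]
        rw [if_pos h3]
        ring
      rw [e1, e2]
    · have e1 : affTFun n i j k = k := by simp [affTFun, key, h1, h2]
      rw [e1, e1]

/-- The affine reflection `t_{ij}` (interpreted as the identity when `i ≡ j (mod n)`). -/
noncomputable def affT (n : ℕ) (i j : ℤ) : Equiv.Perm ℤ :=
  if h : (j - i) % (n : ℤ) = 0 then 1
  else Function.Involutive.toPerm _ (affTFun_involutive h)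

/-- The simple reflection `s_i = t_{i,i+1}` of `S̃_n`. -/
noncomputable def affS (n : ℕ) (i : ℤ) : Equiv.Perm ℤ := affT n i (i + 1)

/-- Coxeter length: minimal length of a word in the simple reflections `s_1, …, s_n`. -/
noncomputable def wordLength (n : ℕ) (π : Equiv.Perm ℤ) : ℕ :=
  sInf {l : ℕ | ∃ w : List ℤ,
    (∀ x ∈ w, 1 ≤ x ∧ x ≤ (n : ℤ)) ∧ (w.map (affS n)).prod = π ∧ w.length = l}

/-- The set of inversions of `π`, up to the diagonal translation relation. -/
def InvPair (π : Equiv.Perm ℤ) : Type :=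
  {p : ℤ × ℤ // p.1 < p.2 ∧ π p.2 < π p.1}

/-- The number of equivalence classes of inversions of `π` under
`(a,b) ~ (a + mn, b + mn)`. -/
noncomputable def invLength (n : ℕ) (π : Equiv.Perm ℤ) : ℕ :=
  Nat.card (Quot fun p q : InvPair π =>
    ∃ m : ℤ, q.1.1 = p.1.1 + m * n ∧ q.1.2 = p.1.2 + m * n)

/-- Entry `c_i` of the code of an affine permutation. -/
noncomputable def codeEntry (π : Equiv.Perm ℤ) (i : ℤ) : ℕ :=
  Nat.card {j : ℤ // i < j ∧ π j < π i}

/-- Entry `ĉ_i` of the involution code of an affine involution. -/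
noncomputable def icodeEntry (z : Equiv.Perm ℤ) (i : ℤ) : ℕ :=
  Nat.card {j : ℤ // i < j ∧ z j < z i ∧ z j ≤ i}

/-- `ℓ'(z)`: `n` minus the number of orbits of `z` acting on `ℤ/nℤ`. -/
noncomputable def lprime (n : ℕ) (z : Equiv.Perm ℤ) : ℕ :=
  n - Nat.card (Quot fun a b : ZMod n => ((z (a.val : ℤ) : ℤ) : ZMod n) = b)

/-- The characterizing properties of the Demazure (0-Hecke) product on `S̃_n`:
closure, associativity, `s_i ∘ s_i = s_i`, and agreement with the group product
on length-additive factorizations. -/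
def IsDemazure (n : ℕ) (D : Equiv.Perm ℤ → Equiv.Perm ℤ → Equiv.Perm ℤ) : Prop :=
  (∀ a b, IsAffine n a → IsAffine n b → IsAffine n (D a b)) ∧
  (∀ a b c, IsAffine n a → IsAffine n b → IsAffine n c →
    D (D a b) c = D a (D b c)) ∧
  (∀ i : ℤ, D (affS n i) (affS n i) = affS n i) ∧
  (∀ a b, IsAffine n a → IsAffine n b →
    wordLength n (a * b) = wordLength n a + wordLength n b → D a b = a * b)

/-- The set of Hecke atoms `{π : π⁻¹ ∘ π = z}`. -/
def AHecke (n : ℕ) (D : Equiv.Perm ℤ → Equiv.Perm ℤ → Equiv.Perm ℤ)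
    (z : Equiv.Perm ℤ) : Set (Equiv.Perm ℤ) :=
  {π | IsAffine n π ∧ D π⁻¹ π = z}

/-- The set of atoms: minimal-length Hecke atoms. -/
def DemAtoms (n : ℕ) (D : Equiv.Perm ℤ → Equiv.Perm ℤ → Equiv.Perm ℤ)
    (z : Equiv.Perm ℤ) : Set (Equiv.Perm ℤ) :=
  {π | π ∈ AHecke n D z ∧ ∀ σ ∈ AHecke n D z, wordLength n π ≤ wordLength n σ}

/-- The Bruhat covering relation on `S̃_n`. -/
def BruhatCov (n : ℕ) (a b : Equiv.Perm ℤ) : Prop :=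
  (∃ i j : ℤ, i < j ∧ (j - i) % (n : ℤ) ≠ 0 ∧ b = a * affT n i j) ∧
  wordLength n b = wordLength n a + 1

/-- The Bruhat order on `S̃_n`. -/
def BruhatLE (n : ℕ) : Equiv.Perm ℤ → Equiv.Perm ℤ → Prop :=
  Relation.ReflTransGen (BruhatCov n)

/-- The covering relation of the Bruhat order restricted to involutions in `S̃_n`. -/
def BruhatCovI (n : ℕ) (y z : Equiv.Perm ℤ) : Prop :=
  IsAffine n y ∧ IsAffine n z ∧ y⁻¹ = y ∧ z⁻¹ = z ∧
  BruhatLE n y z ∧ y ≠ z ∧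
  ∀ w : Equiv.Perm ℤ, IsAffine n w → w⁻¹ = w →
    BruhatLE n y w → BruhatLE n w z → w = y ∨ w = z

/-- Strict dominance order on partitions (written as weakly decreasing functions). -/
def DomLT (p q : ℕ → ℕ) : Prop :=
  p ≠ q ∧ ∀ k : ℕ, ∑ i ∈ Finset.range k, p i ≤ ∑ i ∈ Finset.range k, q i

/-- The shape `λ(π)`: the transpose of the partition sorting the code of `π⁻¹`,
recorded as the weakly decreasing function `k ↦ λ(π)_{k+1}`. -/
noncomputable def affShape (n : ℕ) (π : Equiv.Perm ℤ) : ℕ → ℕ :=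
  fun k => Multiset.countP (fun x => k < x)
    ((Finset.Icc (1 : ℤ) (n : ℤ)).val.map (codeEntry π⁻¹))

/-- The shape `μ(z)`: the transpose of the partition sorting the involution code of `z`,
recorded as the weakly decreasing function `k ↦ μ(z)_{k+1}`. -/
noncomputable def invShape (n : ℕ) (z : Equiv.Perm ℤ) : ℕ → ℕ :=
  fun k => Multiset.countP (fun x => k < x)
    ((Finset.Icc (1 : ℤ) (n : ℤ)).val.map (icodeEntry z))

/-- The weakly decreasing rearrangement of a multiset of naturals, padded by zeros. -/
noncomputable def rearr (s : Multiset ℕ) : ℕ → ℕ :=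
  fun k => ((s.sort (· ≤ ·)).reverse).getD k 0

/-- Remove the entries of a list of integers that repeat an earlier residue mod `n`. -/
def dedupMod (n : ℕ) : List ℤ → List ℤ
  | [] => []
  | x :: xs => x :: dedupMod n (xs.filter fun y => (y - x) % (n : ℤ) ≠ 0)
termination_by l => l.length
decreasing_by
  simp only [List.length_cons]
  first
    | exact Nat.lt_succ_of_le ((le_of_eq (List.length_unattach ..)).trans
        ((List.length_filter_le _ _).trans (le_of_eq (List.length_attach ..))))
    | (simp only [List.length_unattach, List.length_attach]
       exact Nat.lt_succ_of_le (List.length_filter_le _ _))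
    | (simp; omega)

/-- The window `[[z(a₁), a₁, z(a₂), a₂, …]]` of `α_min(z)⁻¹`, where `a₁ < a₂ < ⋯`
are the elements `a ∈ [n]` with `a ≤ z(a)`. -/
noncomputable def aminWindow (n : ℕ) (z : Equiv.Perm ℤ) : List ℤ :=
  dedupMod n
    ((((Finset.Icc (1 : ℤ) (n : ℤ)).sort (· ≤ ·)).filter fun a => a ≤ z a).flatMap
      fun a => [z a, a])

/-- Cyclically decreasing elements of `S̃_n`. -/
def IsCycDec (n : ℕ) (π : Equiv.Perm ℤ) : Prop :=
  ∃ w : List ℤ,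
    (∀ x ∈ w, 1 ≤ x ∧ x ≤ (n : ℤ)) ∧ (w.map (affS n)).prod = π ∧
    w.length = wordLength n π ∧
    w.Pairwise fun a b => (a + 1 - b) % (n : ℤ) ≠ 0

/-- The coefficient of the monomial `∏ₖ xₖ₊₁^(α k)` in Lam's affine Stanley symmetric
function `F_π`: the number of length-additive factorizations of `π` into cyclically
decreasing factors of lengths prescribed by `α`. -/
noncomputable def stanleyCoeff (n : ℕ) (π : Equiv.Perm ℤ) (α : ℕ →₀ ℕ) : ℕ :=
  Nat.card {f : ℕ → Equiv.Perm ℤ //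
    (∀ k, IsCycDec n (f k)) ∧ (∀ k, wordLength n (f k) = α k) ∧
    (∑ k ∈ α.support, α k) = wordLength n π ∧
    ∃ N : ℕ, (∀ k, N ≤ k → f k = 1) ∧ ((List.range N).map f).prod = π}

/-- The set `Φ⁻_r(y)` of Bruhat covers of `y` of the form `τⁿ_{i r}(y)` with `i < r`
and `i ∉ {r, y(r)} + nℤ`. -/
def PhiMinus (n : ℕ) (τ : ℤ → ℤ → Equiv.Perm ℤ → Equiv.Perm ℤ)
    (y : Equiv.Perm ℤ) (r : ℤ) : Set (Equiv.Perm ℤ) :=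
  {z | BruhatCovI n y z ∧ ∃ i : ℤ, i < r ∧ (i - r) % (n : ℤ) ≠ 0 ∧
    (i - y r) % (n : ℤ) ≠ 0 ∧ z = τ i r y}

/-- The set `Φ⁺_r(y)` of Bruhat covers of `y` of the form `τⁿ_{r j}(y)` with `r < j`
and `j ∉ {r, y(r)} + nℤ`. -/
def PhiPlus (n : ℕ) (τ : ℤ → ℤ → Equiv.Perm ℤ → Equiv.Perm ℤ)
    (y : Equiv.Perm ℤ) (r : ℤ) : Set (Equiv.Perm ℤ) :=
  {z | BruhatCovI n y z ∧ ∃ j : ℤ, r < j ∧ (j - r) % (n : ℤ) ≠ 0 ∧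
    (j - y r) % (n : ℤ) ≠ 0 ∧ z = τ r j y}

/-- The affine symmetric group as a subtype of `Equiv.Perm ℤ`. -/
abbrev AffPerm (n : ℕ) := {π : Equiv.Perm ℤ // IsAffine n π}

/-- The coproduct `Δ(π) = Σ_{π ≐ π'π''} π' ⊗ π''` on `ℚ S̃_n`. -/
noncomputable def affComul (n : ℕ) :
    (AffPerm n →₀ ℚ) →ₗ[ℚ] TensorProduct ℚ (AffPerm n →₀ ℚ) (AffPerm n →₀ ℚ) :=
  Finsupp.lift _ ℚ _ fun π : AffPerm n =>
    ∑ᶠ p ∈ {p : AffPerm n × AffPerm n |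
        p.1.val * p.2.val = π.val ∧
        wordLength n π.val = wordLength n p.1.val + wordLength n p.2.val},
      (Finsupp.single p.1 (1 : ℚ)) ⊗ₜ[ℚ] (Finsupp.single p.2 (1 : ℚ))


namespace HeckeAux

open Equiv Finset

variable {n : ℕ}

/-- Periodicity predicate. -/
def Per (n : ℕ) (π : Equiv.Perm ℤ) : Prop := ∀ i : ℤ, π (i + n) = π i + n

lemma dvd_iff_mod (a : ℤ) : a % (n : ℤ) = 0 ↔ (n : ℤ) ∣ a :=
  ⟨Int.dvd_of_emod_eq_zero, Int.emod_eq_zero_of_dvd⟩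

lemma one_mod_ne (hn : 2 ≤ n) : ¬ ((1 : ℤ) % (n : ℤ) = 0) := by
  rw [dvd_iff_mod]
  intro h
  have := Int.le_of_dvd (by norm_num) h
  have : (2 : ℤ) ≤ (n : ℤ) := by exact_mod_cast hn
  omega

lemma affS_apply (hn : 2 ≤ n) (i k : ℤ) : affS n i k = affTFun n i (i + 1) k := by
  unfold affS affT
  rw [dif_neg (by simpa using one_mod_ne hn)]
  rfl

lemma affS_apply_dvd1 (hn : 2 ≤ n) {i k : ℤ} (h : (n : ℤ) ∣ k - i) :
    affS n i k = k + 1 := by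
  rw [affS_apply hn]
  unfold affTFun
  rw [if_pos ((dvd_iff_mod _).2 h)]
  ring

lemma not_dvd_of_dvd_succ (hn : 2 ≤ n) {i k : ℤ} (h : (n : ℤ) ∣ k - (i + 1)) :
    ¬ (n : ℤ) ∣ k - i := by
  intro h2
  have : (n : ℤ) ∣ 1 := by
    have : (k - i) - (k - (i + 1)) = 1 := by ring
    rw [← this]; exact dvd_sub h2 h
  have := Int.le_of_dvd (by norm_num) this
  have : (2 : ℤ) ≤ (n : ℤ) := by exact_mod_cast hn
  omega

lemma affS_apply_dvd2 (hn : 2 ≤ n) {i k : ℤ} (h : (n : ℤ) ∣ k - (i + 1)) :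
    affS n i k = k - 1 := by
  rw [affS_apply hn]
  unfold affTFun
  rw [if_neg (fun hc => not_dvd_of_dvd_succ hn h ((dvd_iff_mod _).1 hc)),
    if_pos ((dvd_iff_mod _).2 h)]
  ring

lemma affS_apply_not (hn : 2 ≤ n) {i k : ℤ} (h1 : ¬ (n : ℤ) ∣ k - i)
    (h2 : ¬ (n : ℤ) ∣ k - (i + 1)) : affS n i k = k := by
  rw [affS_apply hn]
  unfold affTFun
  rw [if_neg (fun hc => h1 ((dvd_iff_mod _).1 hc)),
    if_neg (fun hc => h2 ((dvd_iff_mod _).1 hc))]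

lemma affS_cases (hn : 2 ≤ n) (i k : ℤ) :
    affS n i k = k + 1 ∨ affS n i k = k - 1 ∨ affS n i k = k := by
  by_cases h1 : (n : ℤ) ∣ k - i
  · exact Or.inl (affS_apply_dvd1 hn h1)
  by_cases h2 : (n : ℤ) ∣ k - (i + 1)
  · exact Or.inr (Or.inl (affS_apply_dvd2 hn h2))
  · exact Or.inr (Or.inr (affS_apply_not hn h1 h2))

lemma affS_invol (hn : 2 ≤ n) (i k : ℤ) : affS n i (affS n i k) = k := by
  have h : ¬ ((i + 1) - i) % (n : ℤ) = 0 := by simpa using one_mod_ne hn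
  have := affTFun_involutive h k
  rw [affS_apply hn, affS_apply hn]
  exact this

lemma affS_sq (hn : 2 ≤ n) (i : ℤ) : affS n i * affS n i = 1 := by
  ext k
  simp only [Equiv.Perm.mul_apply, Equiv.Perm.one_apply]
  exact affS_invol hn i k

lemma affS_inv (hn : 2 ≤ n) (i : ℤ) : (affS n i)⁻¹ = affS n i :=
  inv_eq_of_mul_eq_one_right (affS_sq hn i)

lemma affS_inj (hn : 2 ≤ n) {i a b : ℤ} (h : affS n i a = affS n i b) : a = b :=
  (affS n i).injective h

lemma affS_eq_iff (hn : 2 ≤ n) {i a b : ℤ} : affS n i a = b ↔ a = affS n i b := by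
  constructor
  · rintro rfl; exact (affS_invol hn i a).symm
  · rintro rfl; exact affS_invol hn i b

lemma affS_ne_one (hn : 2 ≤ n) (i : ℤ) : affS n i ≠ 1 := by
  intro h
  have h1 : affS n i i = i + 1 := affS_apply_dvd1 hn (by simp)
  rw [h] at h1
  simp at h1

lemma affS_per (hn : 2 ≤ n) (i : ℤ) : Per n (affS n i) := by
  intro k
  by_cases h1 : (n : ℤ) ∣ k - i
  · rw [affS_apply_dvd1 hn h1, affS_apply_dvd1 hn (by
      have : k + (n : ℤ) - i = (k - i) + n := by ring
      rw [this]; exact dvd_add h1 ⟨1, by ring⟩)]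
    ring
  by_cases h2 : (n : ℤ) ∣ k - (i + 1)
  · rw [affS_apply_dvd2 hn h2, affS_apply_dvd2 hn (by
      have : k + (n : ℤ) - (i + 1) = (k - (i + 1)) + n := by ring
      rw [this]; exact dvd_add h2 ⟨1, by ring⟩)]
    ring
  · rw [affS_apply_not hn h1 h2, affS_apply_not hn (by
      intro hc
      apply h1
      have : k - i = (k + n - i) - n := by ring
      rw [this]; exact dvd_sub hc ⟨1, by ring⟩) (by
      intro hc
      apply h2
      have : k - (i + 1) = (k + n - (i + 1)) - n := by ring
      rw [this]; exact dvd_sub hc ⟨1, by ring⟩)]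

end HeckeAux

namespace HeckeAux

open Equiv Finset

variable {n : ℕ}

lemma per_mul {π σ : Equiv.Perm ℤ} (hπ : Per n π) (hσ : Per n σ) : Per n (π * σ) := by
  intro k
  simp only [Equiv.Perm.mul_apply]
  rw [hσ k, hπ (σ k)]

lemma per_one : Per n (1 : Equiv.Perm ℤ) := fun k => rfl

lemma per_inv {π : Equiv.Perm ℤ} (hπ : Per n π) : Per n π⁻¹ := by
  intro k
  apply π.injective
  rw [show π (π⁻¹ (k + n)) = k + n from π.apply_symm_apply _]
  have := hπ (π⁻¹ k)
  rw [show π (π⁻¹ k) = k from π.apply_symm_apply k] at this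
  rw [this]

lemma per_add_mul {π : Equiv.Perm ℤ} (hπ : Per n π) (k : ℤ) :
    ∀ t : ℤ, π (k + t * n) = π k + t * n := by
  intro t
  induction t using Int.induction_on with
  | zero => simp
  | succ m ih =>
      have : k + ((m : ℤ) + 1) * n = (k + m * n) + n := by ring
      rw [this, hπ, ih]; ring
  | pred m ih =>
      have h2 : k + (-(m : ℤ)) * n = (k + (-(m : ℤ) - 1) * n) + n := by ring
      rw [h2, hπ] at ih
      have : π (k + (-(m : ℤ) - 1) * n) = π k + (-(m : ℤ) - 1) * n := by omega
      exact this

lemma per_dvd {π : Equiv.Perm ℤ} (hπ : Per n π) {a b : ℤ} (h : (n : ℤ) ∣ a - b) :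
    π a = π b + (a - b) := by
  obtain ⟨t, ht⟩ := h
  have ha : a = b + t * n := by rw [mul_comm] at ht; omega
  rw [ha, per_add_mul hπ b t]
  omega

lemma per_dvd_apply {π : Equiv.Perm ℤ} (hπ : Per n π) {a b : ℤ} (h : (n : ℤ) ∣ a - b) :
    (n : ℤ) ∣ π a - π b := by
  rw [per_dvd hπ h]
  simpa using h

/-- canonical representative of the class of `a` in `[1, n]`. -/
def wnorm (n : ℕ) (a : ℤ) : ℤ := (a - 1) % (n : ℤ) + 1

lemma wnorm_mem (hn : 0 < n) (a : ℤ) : wnorm n a ∈ Finset.Icc (1 : ℤ) (n : ℤ) := by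
  have h0 : (0 : ℤ) < (n : ℤ) := by exact_mod_cast hn
  have h1 := Int.emod_nonneg (a - 1) (by omega : (n : ℤ) ≠ 0)
  have h2 := Int.emod_lt_of_pos (a - 1) h0
  simp only [Finset.mem_Icc, wnorm]
  omega

lemma wnorm_dvd (a : ℤ) : (n : ℤ) ∣ wnorm n a - a := by
  have := Int.mul_ediv_add_emod (a - 1) (n : ℤ)
  exact ⟨-((a - 1) / n), by unfold wnorm; linarith⟩

lemma wnorm_eq_self (hn : 0 < n) {a : ℤ} (ha : a ∈ Finset.Icc (1 : ℤ) (n : ℤ)) :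
    wnorm n a = a := by
  simp only [Finset.mem_Icc] at ha
  unfold wnorm
  rw [Int.emod_eq_of_lt (by omega) (by omega)]
  ring

lemma wnorm_congr {a b : ℤ} (h : (n : ℤ) ∣ a - b) : wnorm n a = wnorm n b := by
  unfold wnorm
  have : (a - 1) % (n : ℤ) = (b - 1) % (n : ℤ) := by
    rw [Int.emod_eq_emod_iff_emod_sub_eq_zero]
    rw [dvd_iff_mod]
    simpa using h
  rw [this]

lemma window_unique (hn : 0 < n) {a b : ℤ} (ha : a ∈ Finset.Icc (1 : ℤ) (n : ℤ))
    (hb : b ∈ Finset.Icc (1 : ℤ) (n : ℤ)) (h : (n : ℤ) ∣ a - b) : a = b := by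
  rw [← wnorm_eq_self hn ha, ← wnorm_eq_self hn hb]
  exact wnorm_congr h

/-- The set counted by `codeEntry`. -/
lemma codeSet_finite (hn : 0 < n) {π : Equiv.Perm ℤ} (hπ : Per n π) (a : ℤ) :
    {j : ℤ | a < j ∧ π j < π a}.Finite := by
  have hne : (Finset.Icc (1 : ℤ) (n : ℤ)).Nonempty := ⟨1, by
    simp only [Finset.mem_Icc]
    exact ⟨le_refl _, by exact_mod_cast hn⟩⟩
  set m := (Finset.Icc (1 : ℤ) (n : ℤ)).inf' hne π with hm
  apply Set.Finite.subset (Set.finite_Icc (a + 1) ((n : ℤ) + π a - 1 - m))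
  rintro j ⟨hj1, hj2⟩
  have hw : j = wnorm n j + ((j - 1) / n) * n := by
    have := Int.mul_ediv_add_emod (j - 1) (n : ℤ)
    unfold wnorm
    linarith
  have hπj : π j = π (wnorm n j) + ((j - 1) / n) * n := by
    conv_lhs => rw [hw]
    exact per_add_mul hπ _ _
  have hmle : m ≤ π (wnorm n j) := Finset.inf'_le _ (wnorm_mem hn j)
  have hwb := wnorm_mem hn j
  simp only [Finset.mem_Icc] at hwb
  constructor
  · omega
  · have : ((j - 1) / n) * n ≤ π a - 1 - m := by omega
    omega

lemma codeEntry_eq_ncard (π : Equiv.Perm ℤ) (a : ℤ) :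
    codeEntry π a = {j : ℤ | a < j ∧ π j < π a}.ncard := by
  rw [← Nat.card_coe_set_eq]
  rfl

lemma code_shift {π : Equiv.Perm ℤ} (hπ : Per n π) (a : ℤ) (t : ℤ) :
    codeEntry π (a + t * n) = codeEntry π a := by
  unfold codeEntry
  apply Nat.card_congr
  refine ⟨fun x => ⟨x.1 - t * n, ?_⟩, fun x => ⟨x.1 + t * n, ?_⟩, ?_, ?_⟩
  · obtain ⟨j, hj1, hj2⟩ := x
    constructor
    · simp only; omega
    · simp only
      have h1 : π j = π (j - t * n) + t * n := by
        have := per_add_mul hπ (j - t * n) t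
        rw [show j - t * n + t * n = j by ring] at this
        omega
      have h2 := per_add_mul hπ a t
      omega
  · obtain ⟨j, hj1, hj2⟩ := x
    constructor
    · simp only; omega
    · simp only
      have h1 := per_add_mul hπ j t
      have h2 := per_add_mul hπ a t
      omega
  · rintro ⟨j, hj⟩; simp
  · rintro ⟨j, hj⟩; simp

lemma code_wnorm {π : Equiv.Perm ℤ} (hπ : Per n π) (a : ℤ) :
    codeEntry π (wnorm n a) = codeEntry π a := by
  have hw : a = wnorm n a + ((a - 1) / n) * n := by
    have := Int.mul_ediv_add_emod (a - 1) (n : ℤ)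
    unfold wnorm
    linarith
  conv_rhs => rw [hw]
  rw [code_shift hπ]

end HeckeAux

namespace HeckeAux

open Equiv Finset

variable {n : ℕ}

lemma s_lt_s (hn : 2 ≤ n) (i : ℤ) {a b : ℤ} (hab : a < b)
    (hx : ¬ ((n : ℤ) ∣ a - i ∧ b = a + 1)) : affS n i a < affS n i b := by
  have hne : affS n i b ≠ affS n i a := fun h => by
    have := affS_inj hn h; omega
  have hcb := affS_cases hn i b
  by_cases h1 : (n : ℤ) ∣ a - i
  · have hsa : affS n i a = a + 1 := affS_apply_dvd1 hn h1
    have hb2 : b ≠ a + 1 := fun h => hx ⟨h1, h⟩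
    rcases hcb with h | h | h <;> omega
  · have hsb_ne_a : affS n i b ≠ a → True := fun _ => trivial
    have hca := affS_cases hn i a
    have hsa_ne : affS n i a = a + 1 → False := by
      intro h
      apply h1
      by_contra h2
      by_cases h3 : (n : ℤ) ∣ a - (i + 1)
      · rw [affS_apply_dvd2 hn h3] at h; omega
      · rw [affS_apply_not hn h2 h3] at h; omega
    have hsa_le : affS n i a ≤ a := by
      rcases hca with h | h | h
      · exact absurd h (fun hh => hsa_ne hh)
      · omega
      · omega
    -- s b = a would force b = s a ≤ a, contradiction
    have hsb_ne : affS n i b = affS n i (affS n i a) → False := by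
      intro h
      have := affS_inj hn h
      have h2 := affS_invol hn i a
      -- b = s a ≤ a < b
      omega
    rw [affS_invol hn i a] at hsb_ne
    rcases hcb with h | h | h <;> omega

lemma descent_per {π : Equiv.Perm ℤ} (hπ : Per n π) {i : ℤ} (hd : π (i + 1) < π i)
    {k : ℤ} (hk : (n : ℤ) ∣ k - i) : π (k + 1) < π k := by
  have e1 := per_dvd hπ hk
  have e2 : π (k + 1) = π (i + 1) + (k + 1 - (i + 1)) :=
    per_dvd hπ (by simpa using hk)
  omega

lemma code_step_ne (hn : 2 ≤ n) {π : Equiv.Perm ℤ} (hπ : Per n π) {i : ℤ}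
    (hd : π (i + 1) < π i) {a : ℤ} (h : ¬ (n : ℤ) ∣ a - (i + 1)) :
    codeEntry (π * affS n i) a = codeEntry π (affS n i a) := by
  unfold codeEntry
  apply Nat.card_congr
  refine ⟨fun x => ⟨affS n i x.1, ?_⟩, fun x => ⟨affS n i x.1, ?_⟩, ?_, ?_⟩
  · obtain ⟨b, hb1, hb2⟩ := x
    simp only [Equiv.Perm.mul_apply] at hb2
    refine ⟨?_, hb2⟩
    apply s_lt_s hn i hb1
    rintro ⟨hd1, rfl⟩
    -- then s a = a+1, s (a+1) = a, and hb2 : π a < π (a+1), contradicting descent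
    have hsa : affS n i a = a + 1 := affS_apply_dvd1 hn hd1
    have hsb : affS n i (a + 1) = a := by
      rw [affS_apply_dvd2 hn (by simpa using hd1)]; ring
    rw [hsa, hsb] at hb2
    exact absurd hb2 (not_lt.2 (le_of_lt (descent_per hπ hd hd1)))
  · obtain ⟨b', hb1, hb2⟩ := x
    simp only [Equiv.Perm.mul_apply]
    constructor
    · have := s_lt_s hn i (a := affS n i a) (b := b') hb1 (by
        rintro ⟨hd1, -⟩
        apply h
        have h2 : (n : ℤ) ∣ affS n i (affS n i a) - affS n i i :=
          per_dvd_apply (affS_per hn i) hd1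
        rw [affS_invol hn i a, affS_apply_dvd1 hn (by simp)] at h2
        exact h2)
      rwa [affS_invol hn i a] at this
    · rwa [affS_invol hn i b']
  · rintro ⟨b, hb⟩
    simp [affS_invol hn i b]
  · rintro ⟨b, hb⟩
    simp [affS_invol hn i b]

lemma code_step_eq (hn : 2 ≤ n) {π : Equiv.Perm ℤ} (hπ : Per n π) {i : ℤ}
    (hd : π (i + 1) < π i) {a : ℤ} (h : (n : ℤ) ∣ a - (i + 1)) :
    codeEntry (π * affS n i) a + 1 = codeEntry π (affS n i a) := by
  have hn0 : 0 < n := by omega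
  have hsa : affS n i a = a - 1 := affS_apply_dvd2 hn h
  set T : Set ℤ := {j | a - 1 < j ∧ π j < π (a - 1)} with hT
  have haT : a ∈ T := by
    constructor
    · omega
    · have := descent_per hπ hd (k := a - 1) (by
        have : a - 1 - i = a - (i + 1) := by ring
        rw [this]; exact h)
      simpa using this
  have hfin : T.Finite := codeSet_finite hn0 hπ (a - 1)
  have h2 : codeEntry π (affS n i a) = T.ncard := by
    rw [codeEntry_eq_ncard, hsa]
  have h3 : codeEntry (π * affS n i) a = (T \ {a}).ncard := by
    rw [← Nat.card_coe_set_eq]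
    unfold codeEntry
    apply Nat.card_congr
    refine ⟨fun x => ⟨affS n i x.1, ?_⟩, fun x => ⟨affS n i x.1, ?_⟩, ?_, ?_⟩
    · obtain ⟨b, hb1, hb2⟩ := x
      simp only [Equiv.Perm.mul_apply] at hb2
      have hlt : affS n i a < affS n i b := by
        apply s_lt_s hn i hb1
        rintro ⟨hd1, -⟩
        exact not_dvd_of_dvd_succ hn h hd1
      constructor
      · constructor
        · rw [hsa] at hlt; exact hlt
        · rw [hsa] at hb2; exact hb2
      · simp only [Set.mem_singleton_iff]
        intro hc
        rw [hc] at hlt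
        rw [hsa] at hlt
        -- hlt : a - 1 < a fine, wrong direction; instead: s b = a → b = s a = a-1 < a, contra hb1
        have : b = affS n i a := by
          rw [← hc, affS_invol hn i b]
        omega
    · obtain ⟨b', hb'⟩ := x
      obtain ⟨⟨hb1, hb2⟩, hb3⟩ := hb'
      simp only [Set.mem_singleton_iff] at hb3
      simp only [Equiv.Perm.mul_apply]
      constructor
      · have := s_lt_s hn i (a := affS n i a) (b := b') (by rw [hsa]; exact hb1) (by
          rintro ⟨-, he⟩
          rw [hsa] at he
          omega)
        rwa [affS_invol hn i a] at this
      · rw [affS_invol hn i b', hsa]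
        exact hb2
    · rintro ⟨b, hb⟩
      simp [affS_invol hn i b]
    · rintro ⟨b, hb⟩
      simp [affS_invol hn i b]
  rw [h2, h3]
  exact Set.ncard_diff_singleton_add_one haT hfin

end HeckeAux

namespace HeckeAux

open Equiv Finset

variable {n : ℕ}

/-- inversion-count length. -/
noncomputable def Nn (n : ℕ) (π : Equiv.Perm ℤ) : ℕ :=
  ∑ a ∈ Finset.Icc (1 : ℤ) (n : ℤ), codeEntry π a

lemma sum_reindex (hn : 0 < n) {ρ : Equiv.Perm ℤ} (hρ : Per n ρ)
    {M : Type*} [AddCommMonoid M] (f : ℤ → M) :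
    ∑ k ∈ Finset.Icc (1 : ℤ) (n : ℤ), f (wnorm n (ρ k)) =
      ∑ k ∈ Finset.Icc (1 : ℤ) (n : ℤ), f k := by
  apply Finset.sum_nbij' (i := fun k => wnorm n (ρ k)) (j := fun k => wnorm n (ρ⁻¹ k))
  · intro a _; exact wnorm_mem hn _
  · intro a _; exact wnorm_mem hn _
  · intro a ha
    have h1 : (n : ℤ) ∣ wnorm n (ρ a) - ρ a := wnorm_dvd _
    have h2 : (n : ℤ) ∣ ρ⁻¹ (wnorm n (ρ a)) - ρ⁻¹ (ρ a) := per_dvd_apply (per_inv hρ) h1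
    rw [show ρ⁻¹ (ρ a) = a from ρ.symm_apply_apply a] at h2
    rw [wnorm_congr h2, wnorm_eq_self hn ha]
  · intro a ha
    have h1 : (n : ℤ) ∣ wnorm n (ρ⁻¹ a) - ρ⁻¹ a := wnorm_dvd _
    have h2 : (n : ℤ) ∣ ρ (wnorm n (ρ⁻¹ a)) - ρ (ρ⁻¹ a) := per_dvd_apply hρ h1
    rw [show ρ (ρ⁻¹ a) = a from ρ.apply_symm_apply a] at h2
    rw [wnorm_congr h2, wnorm_eq_self hn ha]
  · intro a _; rfl

lemma Nn_descent (hn : 2 ≤ n) {π : Equiv.Perm ℤ} (hπ : Per n π) {i : ℤ}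
    (hd : π (i + 1) < π i) : Nn n (π * affS n i) + 1 = Nn n π := by
  have hn0 : 0 < n := by omega
  set a0 := wnorm n (i + 1) with ha0def
  have ha0 : a0 ∈ Finset.Icc (1 : ℤ) (n : ℤ) := wnorm_mem hn0 _
  have ha0d : (n : ℤ) ∣ a0 - (i + 1) := wnorm_dvd _
  have key : ∀ a ∈ Finset.Icc (1 : ℤ) (n : ℤ),
      codeEntry (π * affS n i) a + (if a = a0 then 1 else 0)
        = codeEntry π (wnorm n (affS n i a)) := by
    intro a ha
    by_cases he : a = a0
    · subst he
      rw [if_pos rfl, code_wnorm hπ, ← code_step_eq hn hπ hd ha0d]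
    · rw [if_neg he, add_zero, code_wnorm hπ]
      apply code_step_ne hn hπ hd
      intro hc
      apply he
      apply window_unique hn0 ha ha0
      have : a - a0 = (a - (i + 1)) - (a0 - (i + 1)) := by ring
      rw [this]
      exact dvd_sub hc ha0d
  have hsum := Finset.sum_congr rfl key
  rw [Finset.sum_add_distrib, Finset.sum_ite_eq' (Finset.Icc (1 : ℤ) (n : ℤ)) a0
    (fun _ => (1 : ℕ)), if_pos ha0] at hsum
  have hre : ∑ a ∈ Finset.Icc (1 : ℤ) (n : ℤ), codeEntry π (wnorm n (affS n i a))
      = ∑ a ∈ Finset.Icc (1 : ℤ) (n : ℤ), codeEntry π a :=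
    sum_reindex hn0 (affS_per hn i) (codeEntry π)
  rw [hre] at hsum
  exact hsum

lemma Nn_ascent (hn : 2 ≤ n) {π : Equiv.Perm ℤ} (hπ : Per n π) {i : ℤ}
    (ha : π i < π (i + 1)) : Nn n π + 1 = Nn n (π * affS n i) := by
  have hσ : Per n (π * affS n i) := per_mul hπ (affS_per hn i)
  have hd' : (π * affS n i) (i + 1) < (π * affS n i) i := by
    simp only [Equiv.Perm.mul_apply]
    rw [affS_apply_dvd2 hn (by simp), affS_apply_dvd1 hn (by simp)]
    simpa using ha
  have := Nn_descent hn hσ hd'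
  rw [mul_assoc, affS_sq hn, mul_one] at this
  exact this

lemma Nn_one : Nn n 1 = 0 := by
  unfold Nn
  apply Finset.sum_eq_zero
  intro a _
  unfold codeEntry
  have : IsEmpty {j : ℤ // a < j ∧ (1 : Equiv.Perm ℤ) j < (1 : Equiv.Perm ℤ) a} := by
    constructor
    rintro ⟨j, hj1, hj2⟩
    simp only [Equiv.Perm.one_apply] at hj2
    omega
  exact Nat.card_of_isEmpty

end HeckeAux

namespace HeckeAux

open Equiv Finset

variable {n : ℕ}

lemma card_window (hn : 0 < n) : (Finset.Icc (1 : ℤ) (n : ℤ)).card = n := by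
  rw [Int.card_Icc]
  simp

lemma affine_one : IsAffine n (1 : Equiv.Perm ℤ) := ⟨fun _ => rfl, rfl⟩

lemma wnorm_dvd' (a : ℤ) : (n : ℤ) ∣ a - wnorm n a :=
  dvd_sub_comm.mp (wnorm_dvd a)

lemma sum_wnorm_diff {ρ : Equiv.Perm ℤ} (hn : 0 < n) (hρ : Per n ρ)
    (hsum : ∑ k ∈ Finset.Icc (1 : ℤ) (n : ℤ), ρ k = ∑ k ∈ Finset.Icc (1 : ℤ) (n : ℤ), k) :
    ∑ k ∈ Finset.Icc (1 : ℤ) (n : ℤ), (ρ k - wnorm n (ρ k)) = 0 := by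
  have h1 : ∑ k ∈ Finset.Icc (1 : ℤ) (n : ℤ), wnorm n (ρ k)
      = ∑ k ∈ Finset.Icc (1 : ℤ) (n : ℤ), k := sum_reindex hn hρ id
  rw [Finset.sum_sub_distrib, h1, hsum, sub_self]

lemma affine_mul {π σ : Equiv.Perm ℤ} (hn : 0 < n) (hπ : IsAffine n π) (hσ : IsAffine n σ) :
    IsAffine n (π * σ) := by
  refine ⟨per_mul hπ.1 hσ.1, ?_⟩
  have key : ∀ k : ℤ, (π * σ) k = π (wnorm n (σ k)) + (σ k - wnorm n (σ k)) := by
    intro k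
    simp only [Equiv.Perm.mul_apply]
    have := per_dvd hπ.1 (a := σ k) (b := wnorm n (σ k)) (wnorm_dvd' _)
    omega
  calc ∑ k ∈ Finset.Icc (1 : ℤ) (n : ℤ), (π * σ) k
      = ∑ k ∈ Finset.Icc (1 : ℤ) (n : ℤ), (π (wnorm n (σ k)) + (σ k - wnorm n (σ k))) :=
        Finset.sum_congr rfl (fun k _ => key k)
    _ = (∑ k ∈ Finset.Icc (1 : ℤ) (n : ℤ), π (wnorm n (σ k)))
        + ∑ k ∈ Finset.Icc (1 : ℤ) (n : ℤ), (σ k - wnorm n (σ k)) := Finset.sum_add_distrib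
    _ = (∑ k ∈ Finset.Icc (1 : ℤ) (n : ℤ), π k) + 0 := by
        rw [sum_reindex hn hσ.1 π, sum_wnorm_diff hn hσ.1 hσ.2]
    _ = ∑ k ∈ Finset.Icc (1 : ℤ) (n : ℤ), k := by rw [add_zero, hπ.2]

lemma affine_inv {π : Equiv.Perm ℤ} (hn : 0 < n) (hπ : IsAffine n π) : IsAffine n π⁻¹ := by
  refine ⟨per_inv hπ.1, ?_⟩
  have hW : ∀ x : ℤ, x = x := fun _ => rfl
  have key : ∀ k : ℤ, π (wnorm n (π⁻¹ k)) = k - (π⁻¹ k - wnorm n (π⁻¹ k)) := by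
    intro k
    have h1 := per_dvd hπ.1 (a := π⁻¹ k) (b := wnorm n (π⁻¹ k)) (wnorm_dvd' _)
    have h2 : π (π⁻¹ k) = k := π.apply_symm_apply k
    have h3 := per_dvd hπ.1 (a := wnorm n (π⁻¹ k)) (b := π⁻¹ k) (wnorm_dvd _)
    omega
  have hD : ∑ k ∈ Finset.Icc (1 : ℤ) (n : ℤ), (π⁻¹ k - wnorm n (π⁻¹ k)) = 0 := by
    have e1 : ∑ k ∈ Finset.Icc (1 : ℤ) (n : ℤ), π (wnorm n (π⁻¹ k)) = ∑ k ∈ Finset.Icc (1 : ℤ) (n : ℤ), π k :=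
      sum_reindex hn (per_inv hπ.1) π
    have e2 : ∑ k ∈ Finset.Icc (1 : ℤ) (n : ℤ), π (wnorm n (π⁻¹ k))
        = ∑ k ∈ Finset.Icc (1 : ℤ) (n : ℤ), (k - (π⁻¹ k - wnorm n (π⁻¹ k))) :=
      Finset.sum_congr rfl (fun k _ => key k)
    rw [hπ.2] at e1
    rw [e1] at e2
    rw [Finset.sum_sub_distrib] at e2
    omega
  have e3 : ∑ k ∈ Finset.Icc (1 : ℤ) (n : ℤ), wnorm n (π⁻¹ k) = ∑ k ∈ Finset.Icc (1 : ℤ) (n : ℤ), k := sum_reindex hn (per_inv hπ.1) id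
  calc ∑ k ∈ Finset.Icc (1 : ℤ) (n : ℤ), π⁻¹ k
      = ∑ k ∈ Finset.Icc (1 : ℤ) (n : ℤ), (wnorm n (π⁻¹ k) + (π⁻¹ k - wnorm n (π⁻¹ k))) := by
        apply Finset.sum_congr rfl; intro k _; ring
    _ = (∑ k ∈ Finset.Icc (1 : ℤ) (n : ℤ), wnorm n (π⁻¹ k)) + ∑ k ∈ Finset.Icc (1 : ℤ) (n : ℤ), (π⁻¹ k - wnorm n (π⁻¹ k)) :=
        Finset.sum_add_distrib
    _ = ∑ k ∈ Finset.Icc (1 : ℤ) (n : ℤ), k := by rw [e3, hD, add_zero]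

lemma sum_indicator_dvd (hn : 0 < n) (c : ℤ) :
    ∑ k ∈ Finset.Icc (1 : ℤ) (n : ℤ), (if (n : ℤ) ∣ k - c then (1 : ℤ) else 0) = 1 := by
  have key : ∀ k ∈ Finset.Icc (1 : ℤ) (n : ℤ),
      (if (n : ℤ) ∣ k - c then (1 : ℤ) else 0) = (if k = wnorm n c then (1 : ℤ) else 0) := by
    intro k hk
    congr 1
    apply propext
    constructor
    · intro hd
      apply window_unique hn hk (wnorm_mem hn c)
      have h2 := wnorm_dvd (n := n) c
      have : k - wnorm n c = (k - c) - (wnorm n c - c) := by ring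
      rw [this]
      exact dvd_sub hd h2
    · rintro rfl
      have := wnorm_dvd (n := n) c
      omega
  rw [Finset.sum_congr rfl key,
    Finset.sum_ite_eq' (Finset.Icc (1 : ℤ) (n : ℤ)) (wnorm n c) (fun _ => (1 : ℤ)),
    if_pos (wnorm_mem hn c)]

lemma affine_affS (hn : 2 ≤ n) (i : ℤ) : IsAffine n (affS n i) := by
  have hn0 : 0 < n := by omega
  refine ⟨affS_per hn i, ?_⟩
  have key : ∀ k : ℤ, affS n i k = k + ((if (n : ℤ) ∣ k - i then (1 : ℤ) else 0)
      + (if (n : ℤ) ∣ k - (i + 1) then (-1 : ℤ) else 0)) := by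
    intro k
    by_cases h1 : (n : ℤ) ∣ k - i
    · rw [if_pos h1, if_neg (fun hc => not_dvd_of_dvd_succ hn hc h1),
        affS_apply_dvd1 hn h1]
      ring
    · by_cases h2 : (n : ℤ) ∣ k - (i + 1)
      · rw [if_neg h1, if_pos h2, affS_apply_dvd2 hn h2]; ring
      · rw [if_neg h1, if_neg h2, affS_apply_not hn h1 h2]; ring
  calc ∑ k ∈ Finset.Icc (1 : ℤ) (n : ℤ), affS n i k
      = ∑ k ∈ Finset.Icc (1 : ℤ) (n : ℤ), (k + ((if (n : ℤ) ∣ k - i then (1 : ℤ) else 0)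
          + (if (n : ℤ) ∣ k - (i + 1) then (-1 : ℤ) else 0))) :=
        Finset.sum_congr rfl (fun k _ => key k)
    _ = ∑ k ∈ Finset.Icc (1 : ℤ) (n : ℤ), k := by
        rw [Finset.sum_add_distrib, Finset.sum_add_distrib, sum_indicator_dvd hn0 i]
        have : ∑ k ∈ Finset.Icc (1 : ℤ) (n : ℤ),
            (if (n : ℤ) ∣ k - (i + 1) then (-1 : ℤ) else 0)
            = -∑ k ∈ Finset.Icc (1 : ℤ) (n : ℤ),
              (if (n : ℤ) ∣ k - (i + 1) then (1 : ℤ) else 0) := by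
          rw [← Finset.sum_neg_distrib]
          apply Finset.sum_congr rfl
          intro k _
          split <;> simp
        rw [this, sum_indicator_dvd hn0 (i + 1)]
        ring

lemma exists_descent (hn : 0 < n) {π : Equiv.Perm ℤ} (hπ : IsAffine n π) (hne : π ≠ 1) :
    ∃ i ∈ Finset.Icc (1 : ℤ) (n : ℤ), π (i + 1) < π i := by
  by_contra hcon
  push_neg at hcon
  have hmono : ∀ i ∈ Finset.Icc (1 : ℤ) (n : ℤ), π i < π (i + 1) := by
    intro i hi
    have h1 := hcon i hi
    have h2 : π i ≠ π (i + 1) := fun h => by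
      have := π.injective h; omega
    omega
  have hall : ∀ k : ℤ, π k < π (k + 1) := by
    intro k
    have hw := wnorm_mem hn k
    have h1 := per_dvd hπ.1 (a := k) (b := wnorm n k) (wnorm_dvd' _)
    have h2 := per_dvd hπ.1 (a := k + 1) (b := wnorm n k + 1) (by
      have := wnorm_dvd' (n := n) k
      have h : k + 1 - (wnorm n k + 1) = k - wnorm n k := by ring
      rw [h]; exact this)
    have := hmono (wnorm n k) hw
    omega
  have hsm : StrictMono π := strictMono_int_of_lt_succ hall
  have hsucc : ∀ k : ℤ, π (k + 1) = π k + 1 := by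
    intro k
    by_contra hne2
    have h1 : π k + 2 ≤ π (k + 1) := by
      have := hall k; omega
    obtain ⟨j, hj⟩ : ∃ j, π j = π k + 1 := ⟨π⁻¹ (π k + 1), π.apply_symm_apply _⟩
    rcases le_or_gt j k with h | h
    · have := hsm.le_iff_le.2 h
      omega
    · have : k + 1 ≤ j := h
      have := hsm.le_iff_le.2 this
      omega
  have hlin : ∀ k : ℤ, π k = k + π 0 := by
    intro k
    induction k using Int.induction_on with
    | zero => simp
    | succ m ih => rw [hsucc m, ih]; push_cast; ring
    | pred m ih =>
        have := hsucc (-(m : ℤ) - 1)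
        rw [show -(m : ℤ) - 1 + 1 = -(m : ℤ) by ring] at this
        rw [ih] at this
        push_cast
        omega
  have hsum := hπ.2
  have : ∑ k ∈ Finset.Icc (1 : ℤ) (n : ℤ), π k
      = (∑ k ∈ Finset.Icc (1 : ℤ) (n : ℤ), k) + (n : ℤ) * π 0 := by
    calc ∑ k ∈ Finset.Icc (1 : ℤ) (n : ℤ), π k
        = ∑ k ∈ Finset.Icc (1 : ℤ) (n : ℤ), (k + π 0) :=
          Finset.sum_congr rfl (fun k _ => hlin k)
      _ = (∑ k ∈ Finset.Icc (1 : ℤ) (n : ℤ), k) + (n : ℤ) * π 0 := by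
          rw [Finset.sum_add_distrib, Finset.sum_const, card_window hn]
          simp [mul_comm]
  have hπ0 : π 0 = 0 := by
    have hnn : (0 : ℤ) < (n : ℤ) := by exact_mod_cast hn
    rw [hsum] at this
    have := this.symm
    nlinarith [this]
  apply hne
  ext k
  rw [hlin k, hπ0]
  simp

end HeckeAux

namespace HeckeAux

open Equiv Finset

variable {n : ℕ}

def WordP (n : ℕ) (w : List ℤ) : Prop := ∀ x ∈ w, 1 ≤ x ∧ x ≤ (n : ℤ)

noncomputable def wprod (n : ℕ) (w : List ℤ) : Equiv.Perm ℤ := (w.map (affS n)).prod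

lemma wprod_nil : wprod n [] = 1 := rfl

lemma wprod_append (w₁ w₂ : List ℤ) : wprod n (w₁ ++ w₂) = wprod n w₁ * wprod n w₂ := by
  unfold wprod
  rw [List.map_append, List.prod_append]

lemma wprod_cons (x : ℤ) (w : List ℤ) : wprod n (x :: w) = affS n x * wprod n w := by
  unfold wprod
  rw [List.map_cons, List.prod_cons]

lemma wprod_singleton (x : ℤ) : wprod n [x] = affS n x := by
  unfold wprod; simp

lemma wprod_affine (hn : 2 ≤ n) {w : List ℤ} (hw : WordP n w) : IsAffine n (wprod n w) := by
  induction w with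
  | nil => exact affine_one
  | cons x t ih =>
      rw [wprod_cons]
      exact affine_mul (by omega) (affine_affS hn x)
        (ih (fun y hy => hw y (List.mem_cons_of_mem x hy)))

lemma wordLength_eq_sInf (π : Equiv.Perm ℤ) :
    wordLength n π = sInf {l : ℕ | ∃ w : List ℤ, WordP n w ∧ wprod n w = π ∧ w.length = l} :=
  rfl

lemma exists_reduced_word (hn : 2 ≤ n) :
    ∀ (N : ℕ) (π : Equiv.Perm ℤ), IsAffine n π → Nn n π = N →
      ∃ w : List ℤ, WordP n w ∧ wprod n w = π ∧ w.length = N := by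
  intro N
  induction N using Nat.strong_induction_on with
  | _ N ih =>
    intro π hπ hN
    by_cases hone : π = 1
    · subst hone
      rw [Nn_one] at hN
      exact ⟨[], fun x hx => absurd hx List.not_mem_nil, wprod_nil, by simp [← hN]⟩
    · obtain ⟨i, hi, hd⟩ := exists_descent (by omega) hπ hone
      have hdec := Nn_descent hn hπ.1 hd
      have hlt : Nn n (π * affS n i) < N := by omega
      obtain ⟨w, hw1, hw2, hw3⟩ := ih _ hlt (π * affS n i)
        (affine_mul (by omega) hπ (affine_affS hn i)) rfl
      refine ⟨w ++ [i], ?_, ?_, ?_⟩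
      · intro x hx
        rcases List.mem_append.1 hx with h | h
        · exact hw1 x h
        · simp only [List.mem_singleton] at h
          subst h
          simpa using Finset.mem_Icc.1 hi
      · rw [wprod_append, hw2, wprod_singleton, mul_assoc, affS_sq hn, mul_one]
      · simp [hw3]
        omega

lemma Nn_le_word_length (hn : 2 ≤ n) {w : List ℤ} (hw : WordP n w) :
    Nn n (wprod n w) ≤ w.length := by
  induction w using List.reverseRecOn with
  | nil => simp [wprod_nil, Nn_one]
  | append_singleton t x ih =>
      have hwt : WordP n t := fun y hy => hw y (by simp [hy])
      have hπ : IsAffine n (wprod n t) := wprod_affine hn hwt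
      have hx : wprod n (t ++ [x]) = wprod n t * affS n x := by
        rw [wprod_append, wprod_singleton]
      rw [hx]
      have hne : wprod n t x ≠ wprod n t (x + 1) := fun h => by
        have := (wprod n t).injective h; omega
      rcases lt_or_gt_of_ne hne with h | h
      · have := Nn_ascent hn hπ.1 h
        have := ih hwt
        simp only [List.length_append, List.length_singleton]
        omega
      · have := Nn_descent hn hπ.1 h
        have := ih hwt
        simp only [List.length_append, List.length_singleton]
        omega

lemma wordLength_eq_Nn (hn : 2 ≤ n) {π : Equiv.Perm ℤ} (hπ : IsAffine n π) :
    wordLength n π = Nn n π := by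
  obtain ⟨w, hw1, hw2, hw3⟩ := exists_reduced_word hn (Nn n π) π hπ rfl
  apply le_antisymm
  · exact Nat.sInf_le ⟨w, hw1, hw2, hw3⟩
  · have hne : {l : ℕ | ∃ w : List ℤ, WordP n w ∧ wprod n w = π ∧ w.length = l}.Nonempty :=
      ⟨Nn n π, w, hw1, hw2, hw3⟩
    obtain ⟨w', hw1', hw2', hw3'⟩ := Nat.sInf_mem hne
    rw [wordLength_eq_sInf]
    calc Nn n π = Nn n (wprod n w') := by rw [hw2']
      _ ≤ w'.length := Nn_le_word_length hn hw1'
      _ = _ := hw3'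

lemma wordLength_one_any : wordLength n (1 : Equiv.Perm ℤ) = 0 := by
  rw [wordLength_eq_sInf]
  rw [Nat.sInf_eq_zero]
  exact Or.inl ⟨[], fun x hx => absurd hx List.not_mem_nil, wprod_nil, rfl⟩

lemma wprod_reverse (hn : 2 ≤ n) (w : List ℤ) :
    wprod n w.reverse = (wprod n w)⁻¹ := by
  induction w with
  | nil => simp [wprod_nil]
  | cons x t ih =>
      rw [List.reverse_cons, wprod_append, ih, wprod_singleton, wprod_cons,
        mul_inv_rev, affS_inv hn]

lemma wordLength_inv_le (hn : 2 ≤ n) {π : Equiv.Perm ℤ} (hπ : IsAffine n π) :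
    wordLength n π⁻¹ ≤ wordLength n π := by
  obtain ⟨w, hw1, hw2, hw3⟩ := exists_reduced_word hn (Nn n π) π hπ rfl
  rw [wordLength_eq_Nn hn hπ, ← hw3]
  have : wprod n w.reverse = π⁻¹ := by rw [wprod_reverse hn, hw2]
  have hrev : WordP n w.reverse := fun x hx => hw1 x (List.mem_reverse.1 hx)
  calc wordLength n π⁻¹ ≤ w.reverse.length :=
        Nat.sInf_le ⟨w.reverse, hrev, this, rfl⟩
    _ = w.length := List.length_reverse

lemma wordLength_inv (hn : 2 ≤ n) {π : Equiv.Perm ℤ} (hπ : IsAffine n π) :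
    wordLength n π⁻¹ = wordLength n π := by
  apply le_antisymm (wordLength_inv_le hn hπ)
  have := wordLength_inv_le hn (affine_inv (by omega) hπ)
  rwa [inv_inv] at this

lemma wordLength_affS (hn : 2 ≤ n) {i : ℤ} (hi : i ∈ Finset.Icc (1 : ℤ) (n : ℤ)) :
    wordLength n (affS n i) = 1 := by
  have hle : wordLength n (affS n i) ≤ 1 := by
    apply Nat.sInf_le
    exact ⟨[i], fun x hx => by
      simp only [List.mem_singleton] at hx
      subst hx
      simpa using Finset.mem_Icc.1 hi, wprod_singleton i, rfl⟩
  have hne : wordLength n (affS n i) ≠ 0 := by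
    intro h0
    rw [wordLength_eq_sInf, Nat.sInf_eq_zero] at h0
    rcases h0 with h | h
    · obtain ⟨w, hw1, hw2, hw3⟩ := h
      rw [List.length_eq_zero_iff] at hw3
      subst hw3
      exact affS_ne_one hn i hw2.symm
    · exact absurd (Set.mem_of_eq_of_mem rfl (h ▸ (⟨[i], fun x hx => by
        simp only [List.mem_singleton] at hx
        subst hx
        simpa using Finset.mem_Icc.1 hi, wprod_singleton i, rfl⟩ :
          (1 : ℕ) ∈ {l : ℕ | ∃ w : List ℤ, WordP n w ∧ wprod n w = affS n i ∧ w.length = l}) :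
            (1 : ℕ) ∈ (∅ : Set ℕ)))
        (Set.notMem_empty 1)
  omega

end HeckeAux

namespace HeckeAux

open Equiv Finset

variable {n : ℕ} {D : Equiv.Perm ℤ → Equiv.Perm ℤ → Equiv.Perm ℤ}

lemma D_one_right (hD : IsDemazure n D) {a : Equiv.Perm ℤ} (ha : IsAffine n a) :
    D a 1 = a := by
  have := hD.2.2.2 a 1 ha affine_one (by rw [mul_one, wordLength_one_any, add_zero])
  rwa [mul_one] at this

lemma D_rs_asc (hD : IsDemazure n D) (hn : 2 ≤ n) {a : Equiv.Perm ℤ} (ha : IsAffine n a)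
    {i : ℤ} (hi : i ∈ Finset.Icc (1 : ℤ) (n : ℤ))
    (hl : wordLength n (a * affS n i) = wordLength n a + 1) : D a (affS n i) = a * affS n i :=
  hD.2.2.2 a (affS n i) ha (affine_affS hn i) (by rw [wordLength_affS hn hi]; exact hl)

lemma D_rs_desc (hD : IsDemazure n D) (hn : 2 ≤ n) {a : Equiv.Perm ℤ} (ha : IsAffine n a)
    {i : ℤ} (hi : i ∈ Finset.Icc (1 : ℤ) (n : ℤ))
    (hl : wordLength n (a * affS n i) + 1 = wordLength n a) : D a (affS n i) = a := by
  have hsaff := affine_affS hn i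
  have hρ : IsAffine n (a * affS n i) := affine_mul (by omega) ha hsaff
  have hmm : a * affS n i * affS n i = a := by rw [mul_assoc, affS_sq hn, mul_one]
  have h2 : D (a * affS n i) (affS n i) = a := by
    have := hD.2.2.2 (a * affS n i) (affS n i) hρ hsaff (by
      rw [hmm, wordLength_affS hn hi]
      omega)
    rwa [hmm] at this
  have h3 := hD.2.1 (a * affS n i) (affS n i) (affS n i) hρ hsaff hsaff
  rw [hD.2.2.1 i, h2] at h3
  exact h3

lemma D_ls_asc (hD : IsDemazure n D) (hn : 2 ≤ n) {a : Equiv.Perm ℤ} (ha : IsAffine n a)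
    {i : ℤ} (hi : i ∈ Finset.Icc (1 : ℤ) (n : ℤ))
    (hl : wordLength n (affS n i * a) = wordLength n a + 1) : D (affS n i) a = affS n i * a :=
  hD.2.2.2 (affS n i) a (affine_affS hn i) ha (by rw [wordLength_affS hn hi]; omega)

lemma D_ls_desc (hD : IsDemazure n D) (hn : 2 ≤ n) {a : Equiv.Perm ℤ} (ha : IsAffine n a)
    {i : ℤ} (hi : i ∈ Finset.Icc (1 : ℤ) (n : ℤ))
    (hl : wordLength n (affS n i * a) + 1 = wordLength n a) : D (affS n i) a = a := by
  have hsaff := affine_affS hn i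
  have hρ : IsAffine n (affS n i * a) := affine_mul (by omega) hsaff ha
  have hmm : affS n i * (affS n i * a) = a := by rw [← mul_assoc, affS_sq hn, one_mul]
  have h2 : D (affS n i) (affS n i * a) = a := by
    have := hD.2.2.2 (affS n i) (affS n i * a) hsaff hρ (by
      rw [hmm, wordLength_affS hn hi]
      omega)
    rwa [hmm] at this
  have h3 := hD.2.1 (affS n i) (affS n i) a hsaff hsaff ha
  rw [hD.2.2.1 i] at h3
  calc D (affS n i) a = D (affS n i) (D (affS n i) (affS n i * a)) := by rw [h2]
    _ = D (affS n i) (affS n i * a) := by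
        rw [← hD.2.1 (affS n i) (affS n i) (affS n i * a) hsaff hsaff hρ, hD.2.2.1 i]
    _ = a := h2

lemma wl_le_D_s (hD : IsDemazure n D) (hn : 2 ≤ n) {c : Equiv.Perm ℤ} (hc : IsAffine n c)
    {i : ℤ} (hi : i ∈ Finset.Icc (1 : ℤ) (n : ℤ)) :
    wordLength n c ≤ wordLength n (D c (affS n i)) := by
  have hcs : IsAffine n (c * affS n i) := affine_mul (by omega) hc (affine_affS hn i)
  have hne : c i ≠ c (i + 1) := fun h => by
    have := c.injective h; omega
  rcases lt_or_gt_of_ne hne with h | h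
  · have hasc := Nn_ascent hn hc.1 h
    have hl : wordLength n (c * affS n i) = wordLength n c + 1 := by
      rw [wordLength_eq_Nn hn hcs, wordLength_eq_Nn hn hc]; omega
    rw [D_rs_asc hD hn hc hi hl, hl]
    omega
  · have hdesc := Nn_descent hn hc.1 h
    have hl : wordLength n (c * affS n i) + 1 = wordLength n c := by
      rw [wordLength_eq_Nn hn hcs, wordLength_eq_Nn hn hc]; omega
    rw [D_rs_desc hD hn hc hi hl]

lemma wl_le_D_aux (hD : IsDemazure n D) (hn : 2 ≤ n) :
    ∀ (N : ℕ) (b : Equiv.Perm ℤ), IsAffine n b → Nn n b = N →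
      ∀ a : Equiv.Perm ℤ, IsAffine n a → wordLength n a ≤ wordLength n (D a b) := by
  intro N
  induction N using Nat.strong_induction_on with
  | _ N ih =>
    intro b hb hN a ha
    by_cases hone : b = 1
    · subst hone
      rw [D_one_right hD ha]
    · obtain ⟨i, hi, hd⟩ := exists_descent (by omega) hb hone
      have hdec := Nn_descent hn hb.1 hd
      have hb' : IsAffine n (b * affS n i) := affine_mul (by omega) hb (affine_affS hn i)
      have hmm : b * affS n i * affS n i = b := by rw [mul_assoc, affS_sq hn, mul_one]
      have h2 : D (b * affS n i) (affS n i) = b := by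
        have := hD.2.2.2 (b * affS n i) (affS n i) hb' (affine_affS hn i) (by
          rw [hmm, wordLength_affS hn hi, wordLength_eq_Nn hn hb, wordLength_eq_Nn hn hb']
          omega)
        rwa [hmm] at this
      have h3 := hD.2.1 a (b * affS n i) (affS n i) ha hb' (affine_affS hn i)
      rw [h2] at h3
      have hstep1 : wordLength n a ≤ wordLength n (D a (b * affS n i)) :=
        ih _ (by omega) _ hb' rfl a ha
      have hstep2 : wordLength n (D a (b * affS n i)) ≤
          wordLength n (D (D a (b * affS n i)) (affS n i)) :=
        wl_le_D_s hD hn (hD.1 a (b * affS n i) ha hb') hi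
      rw [h3] at hstep2
      omega

lemma wl_le_D (hD : IsDemazure n D) (hn : 2 ≤ n) {a b : Equiv.Perm ℤ}
    (ha : IsAffine n a) (hb : IsAffine n b) : wordLength n a ≤ wordLength n (D a b) :=
  wl_le_D_aux hD hn (Nn n b) b hb rfl a ha

end HeckeAux

namespace HeckeAux

open Equiv Finset

variable {n : ℕ} {D : Equiv.Perm ℤ → Equiv.Perm ℤ → Equiv.Perm ℤ}

lemma invol_apply {z : Equiv.Perm ℤ} (hzi : z⁻¹ = z) (x : ℤ) : z (z x) = x := by
  have : z⁻¹ (z x) = x := z.symm_apply_apply x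
  rwa [hzi] at this

lemma T_idem (hD : IsDemazure n D) (hn : 2 ≤ n) {u : Equiv.Perm ℤ} (hu : IsAffine n u)
    (i : ℤ) :
    D (affS n i) (D (D (affS n i) (D u (affS n i))) (affS n i))
      = D (affS n i) (D u (affS n i)) := by
  have hs := affine_affS hn i
  have hA : IsAffine n (D u (affS n i)) := hD.1 _ _ hu hs
  have h1 : D (D u (affS n i)) (affS n i) = D u (affS n i) := by
    have := hD.2.1 u (affS n i) (affS n i) hu hs hs
    rw [hD.2.2.1 i] at this
    exact this
  have h2 : D (D (affS n i) (D u (affS n i))) (affS n i)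
      = D (affS n i) (D (D u (affS n i)) (affS n i)) :=
    hD.2.1 (affS n i) (D u (affS n i)) (affS n i) hs hA hs
  rw [h2, h1]
  have h3 : D (D (affS n i) (affS n i)) (D u (affS n i))
      = D (affS n i) (D (affS n i) (D u (affS n i))) :=
    hD.2.1 (affS n i) (affS n i) (D u (affS n i)) hs hs hA
  rw [← h3, hD.2.2.1 i]

lemma Q_mul_s (hD : IsDemazure n D) (hn : 2 ≤ n) {x : Equiv.Perm ℤ} (hx : IsAffine n x)
    {i : ℤ} (hi : i ∈ Finset.Icc (1 : ℤ) (n : ℤ))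
    (hasc : wordLength n (x * affS n i) = wordLength n x + 1) :
    D (x * affS n i)⁻¹ (x * affS n i) = D (affS n i) (D (D x⁻¹ x) (affS n i)) := by
  have hs := affine_affS hn i
  have hn0 : 0 < n := by omega
  have hxinv : IsAffine n x⁻¹ := affine_inv hn0 hx
  have hxs : IsAffine n (x * affS n i) := affine_mul hn0 hx hs
  have hinv_eq : (x * affS n i)⁻¹ = affS n i * x⁻¹ := by rw [mul_inv_rev, affS_inv hn]
  have hlsxi : wordLength n (affS n i * x⁻¹) = wordLength n x⁻¹ + 1 := by
    rw [← hinv_eq, wordLength_inv hn hxs, wordLength_inv hn hx]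
    exact hasc
  have hDs : D (affS n i) x⁻¹ = affS n i * x⁻¹ := D_ls_asc hD hn hxinv hi hlsxi
  have hDx : D x (affS n i) = x * affS n i := D_rs_asc hD hn hx hi hasc
  calc D (x * affS n i)⁻¹ (x * affS n i) = D (affS n i * x⁻¹) (x * affS n i) := by
        rw [hinv_eq]
    _ = D (D (affS n i) x⁻¹) (D x (affS n i)) := by rw [hDs, hDx]
    _ = D (affS n i) (D x⁻¹ (D x (affS n i))) :=
        hD.2.1 (affS n i) x⁻¹ (D x (affS n i)) hs hxinv (hD.1 x (affS n i) hx hs)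
    _ = D (affS n i) (D (D x⁻¹ x) (affS n i)) := by
        rw [hD.2.1 x⁻¹ x (affS n i) hxinv hx hs]

lemma atom_step (hD : IsDemazure n D) (hn : 2 ≤ n) {i : ℤ}
    (hi : i ∈ Finset.Icc (1 : ℤ) (n : ℤ)) {y z π' : Equiv.Perm ℤ}
    (hy : IsAffine n y) (hπ' : IsAffine n π')
    (hTy : D (affS n i) (D y (affS n i)) = z) (hQ : D π'⁻¹ π' = y) (hne : y ≠ z) :
    D (π' * affS n i)⁻¹ (π' * affS n i) = z := by
  have hn0 : 0 < n := by omega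
  have hs := affine_affS hn i
  have hπs : IsAffine n (π' * affS n i) := affine_mul hn0 hπ' hs
  have hneq : π' i ≠ π' (i + 1) := fun h => by
    have := π'.injective h; omega
  rcases lt_or_gt_of_ne hneq with h | h
  · -- ascent
    have hasc : wordLength n (π' * affS n i) = wordLength n π' + 1 := by
      rw [wordLength_eq_Nn hn hπs, wordLength_eq_Nn hn hπ']
      have := Nn_ascent hn hπ'.1 h
      omega
    rw [Q_mul_s hD hn hπ' hi hasc, hQ, hTy]
  · -- descent: contradiction
    exfalso
    have hdesc := Nn_descent hn hπ'.1 h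
    have hρ : IsAffine n (π' * affS n i) := hπs
    have hρs : π' * affS n i * affS n i = π' := by rw [mul_assoc, affS_sq hn, mul_one]
    have hasc : wordLength n (π' * affS n i * affS n i)
        = wordLength n (π' * affS n i) + 1 := by
      rw [hρs, wordLength_eq_Nn hn hπs, wordLength_eq_Nn hn hπ']
      omega
    have hid := Q_mul_s hD hn hρ hi hasc
    rw [hρs, hQ] at hid
    -- hid : y = D s (D (D ρ⁻¹ ρ) s)
    have hq : IsAffine n (D (π' * affS n i)⁻¹ (π' * affS n i)) :=
      hD.1 _ _ (affine_inv hn0 hρ) hρ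
    rw [hid] at hTy
    rw [T_idem hD hn hq i] at hTy
    exact hne (hid.trans hTy)

lemma swap_case (hn : 2 ≤ n) {z : Equiv.Perm ℤ} (hz : Per n z) (hzi : z⁻¹ = z) {i : ℤ}
    (hz1 : z i = i + 1) (hz2 : z (i + 1) = i) : affS n i * z * affS n i = z := by
  ext k
  simp only [Equiv.Perm.mul_apply]
  by_cases h1 : (n : ℤ) ∣ k - i
  · have hsk : affS n i k = k + 1 := affS_apply_dvd1 hn h1
    have hzk1 : z (k + 1) = k := by
      have := per_dvd hz (a := k + 1) (b := i + 1) (by simpa using h1)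
      rw [hz2] at this; omega
    have hzk : z k = k + 1 := by
      have := per_dvd hz (a := k) (b := i) h1
      rw [hz1] at this; omega
    rw [hsk, hzk1, hsk, hzk]
  · by_cases h2 : (n : ℤ) ∣ k - (i + 1)
    · have hsk : affS n i k = k - 1 := affS_apply_dvd2 hn h2
      have hzk1 : z (k - 1) = k := by
        have := per_dvd hz (a := k - 1) (b := i) (by
          have : k - 1 - i = k - (i + 1) := by ring
          rw [this]; exact h2)
        rw [hz1] at this; omega
      have hzk : z k = k - 1 := by
        have := per_dvd hz (a := k) (b := i + 1) h2
        rw [hz2] at this; omega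
      rw [hsk, hzk1, hsk, hzk]
    · have hsk : affS n i k = k := affS_apply_not hn h1 h2
      have hc1 : ¬ (n : ℤ) ∣ z k - i := by
        intro hc
        have ha := per_dvd hz (a := z k) (b := i) hc
        rw [hz1] at ha
        have hb := invol_apply hzi k
        -- z (z k) = z i + (z k - i) = i + 1 + (z k - i), so k - (i+1) = z k - i
        have : k - (i + 1) = z k - i := by
          rw [ha] at hb; omega
        exact h2 (this ▸ hc)
      have hc2 : ¬ (n : ℤ) ∣ z k - (i + 1) := by
        intro hc
        have ha := per_dvd hz (a := z k) (b := i + 1) hc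
        rw [hz2] at ha
        have hb := invol_apply hzi k
        have : k - i = z k - (i + 1) := by
          rw [ha] at hb; omega
        exact h1 (this ▸ hc)
      rw [hsk, affS_apply_not hn hc1 hc2]

lemma sz_descent (hn : 2 ≤ n) {z : Equiv.Perm ℤ} (hz : Per n z) (hzi : z⁻¹ = z) {i : ℤ}
    (hd : z (i + 1) < z i) (hns : ¬ (z i = i + 1 ∧ z (i + 1) = i)) :
    (affS n i * z) (i + 1) < (affS n i * z) i := by
  simp only [Equiv.Perm.mul_apply]
  apply s_lt_s hn i hd
  rintro ⟨hdv, huv⟩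
  have h1 := per_dvd hz (a := z (i + 1)) (b := i) hdv
  have h2 := invol_apply hzi (i + 1)
  rw [h1] at h2
  -- h2 : z i + (z (i+1) - i) = i + 1, huv : z i = z (i+1) + 1
  have hv : z (i + 1) = i := by omega
  exact hns ⟨by omega, hv⟩

lemma exists_atom (hD : IsDemazure n D) (hn : 2 ≤ n) :
    ∀ (N : ℕ) (z : Equiv.Perm ℤ), IsAffine n z → z⁻¹ = z → Nn n z = N →
      ∃ π : Equiv.Perm ℤ, IsAffine n π ∧ D π⁻¹ π = z := by
  intro N
  induction N using Nat.strong_induction_on with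
  | _ N ih =>
    intro z hz hzi hN
    have hn0 : 0 < n := by omega
    by_cases hone : z = 1
    · subst hone
      exact ⟨1, affine_one, by rw [inv_one, D_one_right hD affine_one]⟩
    obtain ⟨i, hi, hd⟩ := exists_descent hn0 hz hone
    have hs := affine_affS hn i
    have hzs_aff : IsAffine n (z * affS n i) := affine_mul hn0 hz hs
    have hsz_aff : IsAffine n (affS n i * z) := affine_mul hn0 hs hz
    have hNzs : Nn n (z * affS n i) + 1 = Nn n z := Nn_descent hn hz.1 hd
    have hinv : (z * affS n i)⁻¹ = affS n i * z := by rw [mul_inv_rev, affS_inv hn, hzi]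
    have hlzs : wordLength n (z * affS n i) + 1 = wordLength n z := by
      rw [wordLength_eq_Nn hn hzs_aff, wordLength_eq_Nn hn hz]; omega
    have hlsz : wordLength n (affS n i * z) + 1 = wordLength n z := by
      rw [← hinv, wordLength_inv hn hzs_aff]; exact hlzs
    by_cases hsw : z i = i + 1 ∧ z (i + 1) = i
    · -- commuting case : y = z * s
      have hc : affS n i * z * affS n i = z := swap_case hn hz.1 hzi hsw.1 hsw.2
      have hcom : affS n i * z = z * affS n i := by
        have := congrArg (fun w => w * affS n i) hc
        rw [mul_assoc (affS n i * z) (affS n i) (affS n i), affS_sq hn, mul_one] at this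
        exact this
      have hy_inv : (z * affS n i)⁻¹ = z * affS n i := by rw [hinv, hcom]
      have hys : z * affS n i * affS n i = z := by rw [mul_assoc, affS_sq hn, mul_one]
      have hTy : D (affS n i) (D (z * affS n i) (affS n i)) = z := by
        have hlys : wordLength n (z * affS n i * affS n i)
            = wordLength n (z * affS n i) + 1 := by rw [hys]; omega
        rw [D_rs_asc hD hn hzs_aff hi hlys, hys]
        exact D_ls_desc hD hn hz hi hlsz
      have hne : z * affS n i ≠ z := fun h => by
        have : affS n i = 1 := by
          have := congrArg (fun w => z⁻¹ * w) h
          simpa [← mul_assoc, mul_assoc] using this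
        exact affS_ne_one hn i this
      obtain ⟨π', hπ'a, hπ'Q⟩ := ih (Nn n (z * affS n i)) (by omega) (z * affS n i)
        hzs_aff hy_inv rfl
      exact ⟨π' * affS n i, affine_mul hn0 hπ'a hs,
        atom_step hD hn hi hzs_aff hπ'a hTy hπ'Q hne⟩
    · -- strict case : y = s * z * s
      have hd2 := sz_descent hn hz.1 hzi hd hsw
      have hy_aff : IsAffine n (affS n i * z * affS n i) := affine_mul hn0 hsz_aff hs
      have hy_inv : (affS n i * z * affS n i)⁻¹ = affS n i * z * affS n i := by
        rw [mul_inv_rev, mul_inv_rev, affS_inv hn, hzi, mul_assoc]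
      have hNy : Nn n (affS n i * z * affS n i) + 1 = Nn n (affS n i * z) :=
        Nn_descent hn hsz_aff.1 hd2
      have hNsz : Nn n (affS n i * z) + 1 = Nn n z := by
        have := hlsz
        rw [wordLength_eq_Nn hn hsz_aff, wordLength_eq_Nn hn hz] at this
        omega
      have hys : affS n i * z * affS n i * affS n i = affS n i * z := by
        rw [mul_assoc (affS n i * z), affS_sq hn, mul_one]
      have hTy : D (affS n i) (D (affS n i * z * affS n i) (affS n i)) = z := by
        have hlys : wordLength n (affS n i * z * affS n i * affS n i)
            = wordLength n (affS n i * z * affS n i) + 1 := by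
          rw [hys, wordLength_eq_Nn hn hsz_aff, wordLength_eq_Nn hn hy_aff]
          omega
        rw [D_rs_asc hD hn hy_aff hi hlys, hys]
        have hss2 : affS n i * (affS n i * z) = z := by
          rw [← mul_assoc, affS_sq hn, one_mul]
        have := D_ls_asc hD hn hsz_aff hi (by
          rw [hss2, wordLength_eq_Nn hn hsz_aff, wordLength_eq_Nn hn hz]
          omega)
        rwa [hss2] at this
      have hne : affS n i * z * affS n i ≠ z := fun h => by
        have h1 : Nn n (affS n i * z * affS n i) = Nn n z := by rw [h]
        omega
      obtain ⟨π', hπ'a, hπ'Q⟩ := ih (Nn n (affS n i * z * affS n i)) (by omega)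
        (affS n i * z * affS n i) hy_aff hy_inv rfl
      exact ⟨π' * affS n i, affine_mul hn0 hπ'a hs,
        atom_step hD hn hi hy_aff hπ'a hTy hπ'Q hne⟩

end HeckeAux
/-- every affine involution has the form `π⁻¹ ∘ π`, so the set of
Hecke atoms of any affine involution is nonempty, and it is finite. -/
theorem hecke_atoms_nonempty_finite (n : ℕ) (hn : 0 < n)
    (D : Equiv.Perm ℤ → Equiv.Perm ℤ → Equiv.Perm ℤ) (hD : IsDemazure n D)
    (z : Equiv.Perm ℤ) (hz : IsAffine n z) (hzi : z⁻¹ = z) :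
    (AHecke n D z).Nonempty ∧ (AHecke n D z).Finite := by
  classical
  rcases Nat.lt_or_ge n 2 with hn1 | hn2
  · -- n = 1
    have hn' : n = 1 := by omega
    subst hn'
    have haff1 : ∀ π : Equiv.Perm ℤ, IsAffine 1 π → π = 1 := by
      intro π hπ
      have hper := hπ.1
      have hsum := hπ.2
      rw [show ((1 : ℕ) : ℤ) = (1 : ℤ) by norm_num, Finset.Icc_self,
        Finset.sum_singleton, Finset.sum_singleton] at hsum
      have hstep : ∀ k : ℤ, π (k + 1) = π k + 1 := by
        intro k
        have := hper k
        simpa using this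
      have hall : ∀ k : ℤ, π k = k := by
        intro k
        induction k using Int.induction_on with
        | zero =>
            have := hstep 0
            rw [zero_add] at this
            omega
        | succ m ih => rw [hstep m, ih]
        | pred m ih =>
            have := hstep (-(m : ℤ) - 1)
            rw [show -(m : ℤ) - 1 + 1 = -(m : ℤ) by ring] at this
            rw [ih] at this
            omega
      ext k
      simp [hall k]
    have hz1 : z = 1 := haff1 z hz
    subst hz1
    have hD11 : D (1 : Equiv.Perm ℤ)⁻¹ 1 = 1 := by
      rw [inv_one]
      exact HeckeAux.D_one_right hD HeckeAux.affine_one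
    constructor
    · exact ⟨1, HeckeAux.affine_one, hD11⟩
    · apply Set.Finite.subset (Set.finite_singleton 1)
      intro π hπ
      exact haff1 π hπ.1
  · -- n ≥ 2
    constructor
    · obtain ⟨π, hπa, hπQ⟩ := HeckeAux.exists_atom hD hn2 (HeckeAux.Nn n z) z hz hzi rfl
      exact ⟨π, hπa, hπQ⟩
    · set S := {x : ℤ // x ∈ Finset.Icc (1 : ℤ) (n : ℤ)}
      let f : List S → Equiv.Perm ℤ := fun l => HeckeAux.wprod n (l.map Subtype.val)
      apply Set.Finite.subset
        ((List.finite_length_le S (HeckeAux.Nn n z)).image f)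
      intro π hπ
      obtain ⟨hπa, hπQ⟩ := hπ
      have hπinv : IsAffine n π⁻¹ := HeckeAux.affine_inv hn hπa
      have hlb : HeckeAux.Nn n π ≤ HeckeAux.Nn n z := by
        have h1 := HeckeAux.wl_le_D hD hn2 hπinv hπa
        rw [hπQ, HeckeAux.wordLength_inv hn2 hπa, HeckeAux.wordLength_eq_Nn hn2 hπa,
          HeckeAux.wordLength_eq_Nn hn2 hz] at h1
        exact h1
      obtain ⟨w, hw1, hw2, hw3⟩ :=
        HeckeAux.exists_reduced_word hn2 (HeckeAux.Nn n π) π hπa rfl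
      refine ⟨w.attach.map (fun x => (⟨x.1, Finset.mem_Icc.mpr (hw1 x.1 x.2)⟩ : S)), ?_, ?_⟩
      · simp only [Set.mem_setOf_eq, List.length_map, List.length_attach]
        omega
      · show HeckeAux.wprod n _ = π
        rw [List.map_map]
        have : ((fun x : S => x.1) ∘ (fun x : {y // y ∈ w} =>
            (⟨x.1, Finset.mem_Icc.mpr (hw1 x.1 x.2)⟩ : S))) = fun x : {y // y ∈ w} => x.1 :=
          rfl
        rw [this]
        rw [show w.attach.map (fun x : {y // y ∈ w} => x.1) = w from List.attach_map_subtype_val w]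
        exact hw2
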